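/- arXiv:2003.09923 — 4 statements merged into one kernel-verified Lean document; each statement's English description precedes it below -/
import Mathlib

section
/- Let M ≥ 2 and let λ_1, …, λ_M be positive real numbers such that λ_i ≠ λ_j for at least one pair of indices i ≠ j. Then for every real α ≥ 0, ∑_{1 ≤ j < i ≤ M} λ_i λ_j (λ_i − λ_j)^2 / ((λ_i+α)^3 (λ_j+α)^3) > 0; consequently (∑_{m=1}^M λ_m/(λ_m+α)^3)·(∑_{m=1}^M λ_m^2/(λ_m+α)^2) − (∑_{m=1}^M λ_m^2/(λ_m+α)^3)·(∑_{m=1}^M λ_m/(λ_m+α)^2) > 0. -/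
open Finset

/-- positivity of the pair sum and of the cross-term difference
when the eigenvalues are not all equal. -/
theorem rzf_sum_pos (M : ℕ) (hM : 2 ≤ M) (lam : Fin M → ℝ)
    (hlam : ∀ m, 0 < lam m)
    (hne : ∃ i j, i ≠ j ∧ lam i ≠ lam j) (α : ℝ) (hα : 0 ≤ α) :
    0 < ∑ i, ∑ j ∈ Finset.univ.filter (fun j => j < i),
        lam i * lam j * (lam i - lam j) ^ 2
          / ((lam i + α) ^ 3 * (lam j + α) ^ 3) ∧
    0 < (∑ m, lam m / (lam m + α) ^ 3) * (∑ m, (lam m) ^ 2 / (lam m + α) ^ 2)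
      - (∑ m, (lam m) ^ 2 / (lam m + α) ^ 3) * (∑ m, lam m / (lam m + α) ^ 2) := by
  have hden : ∀ m : Fin M, 0 < lam m + α := fun m => by have := hlam m; linarith
  set P : Fin M → Fin M → ℝ := fun i j =>
    lam i * lam j * (lam i - lam j) ^ 2 / ((lam i + α) ^ 3 * (lam j + α) ^ 3) with hPdef
  have hP0 : ∀ i j, 0 ≤ P i j := fun i j =>
    div_nonneg (mul_nonneg (mul_nonneg (hlam i).le (hlam j).le) (sq_nonneg _))
      (mul_nonneg (pow_pos (hden i) 3).le (pow_pos (hden j) 3).le)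
  -- find a pair with j < i and lam i ≠ lam j
  obtain ⟨i, j, hij, hlne⟩ := hne
  obtain ⟨i, j, hji, hlne⟩ : ∃ i j : Fin M, j < i ∧ lam i ≠ lam j := by
    rcases lt_trichotomy i j with h | h | h
    · exact ⟨j, i, h, hlne.symm⟩
    · exact absurd h hij
    · exact ⟨i, j, h, hlne⟩
  have hPij : 0 < P i j := by
    apply div_pos
    · have h1 : (lam i - lam j) ^ 2 ≠ 0 := pow_ne_zero 2 (sub_ne_zero.mpr hlne)
      have h2 : 0 < (lam i - lam j) ^ 2 := (sq_nonneg _).lt_of_ne (Ne.symm h1)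
      exact mul_pos (mul_pos (hlam i) (hlam j)) h2
    · exact mul_pos (pow_pos (hden i) 3) (pow_pos (hden j) 3)
  have part1 : 0 < ∑ i, ∑ j ∈ Finset.univ.filter (fun j => j < i), P i j := by
    apply Finset.sum_pos' (fun a _ => Finset.sum_nonneg fun b _ => hP0 a b)
    refine ⟨i, mem_univ _, Finset.sum_pos' (fun b _ => hP0 i b) ⟨j, ?_, hPij⟩⟩
    simp [hji]
  -- the algebraic identity
  set g : Fin M → Fin M → ℝ := fun a b =>
    lam a / (lam a + α) ^ 3 * ((lam b) ^ 2 / (lam b + α) ^ 2)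
      - (lam a) ^ 2 / (lam a + α) ^ 3 * (lam b / (lam b + α) ^ 2) with hgdef
  have hgsym : ∀ a b, g a b + g b a = P a b := by
    intro a b
    have ha := (hden a).ne'
    have hb := (hden b).ne'
    simp only [hgdef, hPdef]
    field_simp
    ring
  have hgdiag : ∀ a, g a a = 0 := fun a => by simp [hgdef]; ring
  set T : Finset (Fin M × Fin M) := Finset.univ ×ˢ Finset.univ with hT
  have hsplit :
      (∑ m, lam m / (lam m + α) ^ 3) * (∑ m, (lam m) ^ 2 / (lam m + α) ^ 2)
      - (∑ m, (lam m) ^ 2 / (lam m + α) ^ 3) * (∑ m, lam m / (lam m + α) ^ 2)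
      = ∑ p ∈ T, g p.1 p.2 := by
    rw [Finset.sum_mul_sum, Finset.sum_mul_sum, ← Finset.sum_sub_distrib]
    rw [Finset.sum_product]
    refine Finset.sum_congr rfl fun a _ => ?_
    rw [← Finset.sum_sub_distrib]
  -- split T into lower, upper, diagonal
  have hTsplit : ∑ p ∈ T, g p.1 p.2
      = ∑ p ∈ T.filter (fun p => p.2 < p.1), g p.1 p.2
        + ∑ p ∈ T.filter (fun p => p.1 < p.2), g p.1 p.2 := by
    rw [← Finset.sum_filter_add_sum_filter_not T (fun p => p.2 < p.1)]
    congr 1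
    rw [← Finset.sum_filter_add_sum_filter_not (T.filter (fun p => ¬ p.2 < p.1))
      (fun p => p.1 < p.2)]
    have h1 : (T.filter (fun p => ¬ p.2 < p.1)).filter (fun p => p.1 < p.2)
        = T.filter (fun p => p.1 < p.2) := by
      rw [Finset.filter_filter]
      exact Finset.filter_congr fun p _ => by
        constructor
        · exact fun h => h.2
        · exact fun h => ⟨not_lt_of_gt h, h⟩
    have h2 : ∑ p ∈ (T.filter (fun p => ¬ p.2 < p.1)).filter (fun p => ¬ p.1 < p.2),
        g p.1 p.2 = 0 := by
      apply Finset.sum_eq_zero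
      intro p hp
      simp only [Finset.mem_filter] at hp
      have : p.1 = p.2 := le_antisymm (not_lt.mp hp.1.2) (not_lt.mp hp.2)
      rw [show g p.1 p.2 = g p.1 p.1 by rw [this]] -- careful
      exact hgdiag p.1
    rw [h1, h2, add_zero]
  have hswap : ∑ p ∈ T.filter (fun p => p.1 < p.2), g p.1 p.2
      = ∑ p ∈ T.filter (fun p => p.2 < p.1), g p.2 p.1 := by
    apply Finset.sum_nbij' (fun p => p.swap) (fun p => p.swap)
    · intro p hp; simp only [Finset.mem_filter, hT, Finset.mem_product] at *
      exact ⟨⟨mem_univ _, mem_univ _⟩, hp.2⟩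
    · intro p hp; simp only [Finset.mem_filter, hT, Finset.mem_product] at *
      exact ⟨⟨mem_univ _, mem_univ _⟩, hp.2⟩
    · intro p _; simp
    · intro p _; simp
    · intro p _; rfl
  have hlowersum : ∑ p ∈ T.filter (fun p => p.2 < p.1), (g p.1 p.2 + g p.2 p.1)
      = ∑ p ∈ T.filter (fun p => p.2 < p.1), P p.1 p.2 :=
    Finset.sum_congr rfl fun p _ => hgsym p.1 p.2
  have hback : ∑ p ∈ T.filter (fun p => p.2 < p.1), P p.1 p.2
      = ∑ i, ∑ j ∈ Finset.univ.filter (fun j => j < i), P i j := by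
    rw [Finset.sum_filter, Finset.sum_product]
    refine Finset.sum_congr rfl fun a _ => ?_
    rw [Finset.sum_filter]
  have hfinal :
      (∑ m, lam m / (lam m + α) ^ 3) * (∑ m, (lam m) ^ 2 / (lam m + α) ^ 2)
      - (∑ m, (lam m) ^ 2 / (lam m + α) ^ 3) * (∑ m, lam m / (lam m + α) ^ 2)
      = ∑ i, ∑ j ∈ Finset.univ.filter (fun j => j < i), P i j := by
    rw [hsplit, hTsplit, hswap, ← Finset.sum_add_distrib, hlowersum, hback]
  exact ⟨part1, by rw [hfinal]; exact part1⟩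
end

section
/- Let M ≥ 2 and let λ_1, …, λ_M be positive real numbers, not all equal, and define f(α) = (∑_{m=1}^M λ_m^2/(λ_m+α)^2) / (∑_{m=1}^M λ_m/(λ_m+α)^2). Then f is strictly monotonically increasing on [0, ∞): for all 0 ≤ α_1 < α_2 one has f(α_1) < f(α_2). -/
open Finset

/-- The eigenvalue functional appearing in the average SNR of RZF beamforming. -/
noncomputable def rzfSnrRatio (M : ℕ) (lam : Fin M → ℝ) (α : ℝ) : ℝ :=
  (∑ m, (lam m) ^ 2 / (lam m + α) ^ 2) / (∑ m, lam m / (lam m + α) ^ 2)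

lemma rzf_key_eq (a b α₁ α₂ : ℝ) (ha : 0 < a) (hb : 0 < b) (h1 : 0 ≤ α₁) (h12 : α₁ < α₂) :
    (a^2/(a+α₂)^2 * (b/(b+α₁)^2) + b^2/(b+α₂)^2 * (a/(a+α₁)^2)) -
    (a^2/(a+α₁)^2 * (b/(b+α₂)^2) + b^2/(b+α₁)^2 * (a/(a+α₂)^2)) =
    (a*b*(a-b)^2*(α₂-α₁)*((a+α₁)*(b+α₂)+(b+α₁)*(a+α₂))) /
      ((a+α₁)^2*(b+α₁)^2*(a+α₂)^2*(b+α₂)^2) := by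
  have h2 : (0:ℝ) ≤ α₂ := le_of_lt (lt_of_le_of_lt h1 h12)
  have hp : (0:ℝ) < a + α₁ := by linarith
  have hq : (0:ℝ) < b + α₁ := by linarith
  have hr : (0:ℝ) < a + α₂ := by linarith
  have hs : (0:ℝ) < b + α₂ := by linarith
  field_simp
  ring

lemma rzf_key_le (a b α₁ α₂ : ℝ) (ha : 0 < a) (hb : 0 < b) (h1 : 0 ≤ α₁) (h12 : α₁ < α₂) :
    a^2/(a+α₁)^2 * (b/(b+α₂)^2) + b^2/(b+α₁)^2 * (a/(a+α₂)^2) ≤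
    a^2/(a+α₂)^2 * (b/(b+α₁)^2) + b^2/(b+α₂)^2 * (a/(a+α₁)^2) := by
  have h2 : (0:ℝ) ≤ α₂ := le_of_lt (lt_of_le_of_lt h1 h12)
  have hp : (0:ℝ) < a + α₁ := by linarith
  have hq : (0:ℝ) < b + α₁ := by linarith
  have hr : (0:ℝ) < a + α₂ := by linarith
  have hs : (0:ℝ) < b + α₂ := by linarith
  have heq := rzf_key_eq a b α₁ α₂ ha hb h1 h12
  have hnum : (0:ℝ) ≤ a*b*(a-b)^2*(α₂-α₁)*((a+α₁)*(b+α₂)+(b+α₁)*(a+α₂)) := by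
    have := mul_pos hp hs
    have := mul_pos hq hr
    have h12' : (0:ℝ) < α₂ - α₁ := by linarith
    positivity
  have hden : (0:ℝ) < (a+α₁)^2*(b+α₁)^2*(a+α₂)^2*(b+α₂)^2 := by positivity
  nlinarith [div_nonneg hnum (le_of_lt hden)]

lemma rzf_key_lt (a b α₁ α₂ : ℝ) (ha : 0 < a) (hb : 0 < b) (h1 : 0 ≤ α₁) (h12 : α₁ < α₂)
    (hab : a ≠ b) :
    a^2/(a+α₁)^2 * (b/(b+α₂)^2) + b^2/(b+α₁)^2 * (a/(a+α₂)^2) <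
    a^2/(a+α₂)^2 * (b/(b+α₁)^2) + b^2/(b+α₂)^2 * (a/(a+α₁)^2) := by
  have h2 : (0:ℝ) ≤ α₂ := le_of_lt (lt_of_le_of_lt h1 h12)
  have hp : (0:ℝ) < a + α₁ := by linarith
  have hq : (0:ℝ) < b + α₁ := by linarith
  have hr : (0:ℝ) < a + α₂ := by linarith
  have hs : (0:ℝ) < b + α₂ := by linarith
  have heq := rzf_key_eq a b α₁ α₂ ha hb h1 h12
  have hnum : (0:ℝ) < a*b*(a-b)^2*(α₂-α₁)*((a+α₁)*(b+α₂)+(b+α₁)*(a+α₂)) := by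
    have hab' : a - b ≠ 0 := sub_ne_zero.mpr hab
    have h12' : (0:ℝ) < α₂ - α₁ := by linarith
    have hsum : (0:ℝ) < (a+α₁)*(b+α₂)+(b+α₁)*(a+α₂) := by
      have := mul_pos hp hs; have := mul_pos hq hr; linarith
    positivity
  have hden : (0:ℝ) < (a+α₁)^2*(b+α₁)^2*(a+α₂)^2*(b+α₂)^2 := by positivity
  nlinarith [div_pos hnum hden]

lemma double_sum_sym {M : ℕ} (F G : Fin M → Fin M → ℝ)
    (h : (∑ m, ∑ n, (F m n + F n m)) < (∑ m, ∑ n, (G m n + G n m))) :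
    (∑ m, ∑ n, F m n) < (∑ m, ∑ n, G m n) := by
  have hF : (∑ m, ∑ n, (F m n + F n m)) = 2 * ∑ m, ∑ n, F m n := by
    simp only [Finset.sum_add_distrib]
    rw [two_mul]
    congr 1
    exact Finset.sum_comm
  have hG : (∑ m, ∑ n, (G m n + G n m)) = 2 * ∑ m, ∑ n, G m n := by
    simp only [Finset.sum_add_distrib]
    rw [two_mul]
    congr 1
    exact Finset.sum_comm
  rw [hF, hG] at h
  linarith

/-- the functional is strictly increasing on `[0, ∞)` when the
eigenvalues are not all equal. -/
theorem rzf_snr_strictMono (M : ℕ) (hM : 2 ≤ M) (lam : Fin M → ℝ)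
    (hlam : ∀ m, 0 < lam m) (hne : ∃ i j, lam i ≠ lam j) :
    ∀ α₁ α₂ : ℝ, 0 ≤ α₁ → α₁ < α₂ →
      rzfSnrRatio M lam α₁ < rzfSnrRatio M lam α₂ := by
  intro α₁ α₂ h1 h12
  have h2 : (0:ℝ) ≤ α₂ := le_of_lt (lt_of_le_of_lt h1 h12)
  haveI : Nonempty (Fin M) := ⟨⟨0, by omega⟩⟩
  have hpos : ∀ (α : ℝ), 0 ≤ α → ∀ m, (0:ℝ) < lam m + α := fun α hα m => by
    have := hlam m; linarith
  have hB : ∀ (α : ℝ), 0 ≤ α → (0:ℝ) < ∑ m, lam m / (lam m + α) ^ 2 := by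
    intro α hα
    apply Finset.sum_pos
    · intro m _
      exact div_pos (hlam m) (pow_pos (hpos α hα m) 2)
    · exact Finset.univ_nonempty
  unfold rzfSnrRatio
  rw [div_lt_div_iff₀ (hB α₁ h1) (hB α₂ h2)]
  -- expand products into double sums
  have expand : ∀ (α β : ℝ),
      (∑ m, (lam m)^2 / (lam m + α)^2) * (∑ n, lam n / (lam n + β)^2) =
      ∑ m, ∑ n, (lam m)^2 / (lam m + α)^2 * (lam n / (lam n + β)^2) := by
    intro α β
    rw [Finset.sum_mul_sum]
  rw [expand α₁ α₂, expand α₂ α₁]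
  have key : (∑ m, ∑ n, ((lam m)^2 / (lam m + α₁)^2 * (lam n / (lam n + α₂)^2)
        + (lam n)^2 / (lam n + α₁)^2 * (lam m / (lam m + α₂)^2))) <
      (∑ m, ∑ n, ((lam m)^2 / (lam m + α₂)^2 * (lam n / (lam n + α₁)^2)
        + (lam n)^2 / (lam n + α₂)^2 * (lam m / (lam m + α₁)^2))) := by
    obtain ⟨i, j, hij⟩ := hne
    apply Finset.sum_lt_sum
    · intro m _
      apply Finset.sum_le_sum
      intro n _
      exact rzf_key_le (lam m) (lam n) α₁ α₂ (hlam m) (hlam n) h1 h12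
    · refine ⟨i, Finset.mem_univ i, ?_⟩
      apply Finset.sum_lt_sum
      · intro n _
        exact rzf_key_le (lam i) (lam n) α₁ α₂ (hlam i) (hlam n) h1 h12
      · exact ⟨j, Finset.mem_univ j,
          rzf_key_lt (lam i) (lam j) α₁ α₂ (hlam i) (hlam j) h1 h12 hij⟩
  refine double_sum_sym
    (fun m n => (lam m)^2 / (lam m + α₁)^2 * (lam n / (lam n + α₂)^2))
    (fun m n => (lam m)^2 / (lam m + α₂)^2 * (lam n / (lam n + α₁)^2)) key
end

section
/- Let M ≥ 2 and let λ_1, …, λ_M be positive real numbers, not all equal, and define f(α) = (∑_{m=1}^M λ_m^2/(λ_m+α)^2) / (∑_{m=1}^M λ_m/(λ_m+α)^2). Then for every finite α ≥ 0 one has f(α) < (∑_{m=1}^M λ_m^2) / (∑_{m=1}^M λ_m); that is, the matched-filter limit strictly dominates every finite regularization value. -/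
open Finset

private lemma sign_aux (a b α : ℝ) (ha : 0 < a) (hb : 0 < b) (hα : 0 ≤ α) :
    (a - b) * (((b + α) ^ 2)⁻¹ - ((a + α) ^ 2)⁻¹)
      = (a - b) ^ 2 * (a + b + 2 * α) / ((a + α) ^ 2 * (b + α) ^ 2) := by
  have h1 : a + α ≠ 0 := by positivity
  have h2 : b + α ≠ 0 := by positivity
  field_simp
  ring

private lemma cheb_aux {ι : Type*} (s : Finset ι) (a w : ι → ℝ)
    (ha : ∀ i ∈ s, 0 < a i)
    (hmono : ∀ i ∈ s, ∀ j ∈ s, 0 ≤ (a i - a j) * (w j - w i))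
    (hstrict : ∃ i ∈ s, ∃ j ∈ s, 0 < (a i - a j) * (w j - w i)) :
    (∑ i ∈ s, a i ^ 2 * w i) * (∑ i ∈ s, a i)
      < (∑ i ∈ s, a i ^ 2) * (∑ i ∈ s, a i * w i) := by
  have key : 0 < ∑ i ∈ s, ∑ j ∈ s, a i * a j * ((a i - a j) * (w j - w i)) := by
    obtain ⟨i0, hi0, j0, hj0, hpos⟩ := hstrict
    refine Finset.sum_pos' (fun i hi => Finset.sum_nonneg fun j hj => ?_) ⟨i0, hi0, ?_⟩
    · exact mul_nonneg (mul_nonneg (ha i hi).le (ha j hj).le) (hmono i hi j hj)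
    · refine Finset.sum_pos' (fun j hj => ?_) ⟨j0, hj0, ?_⟩
      · exact mul_nonneg (mul_nonneg (ha i0 hi0).le (ha j hj).le) (hmono i0 hi0 j hj)
      · exact mul_pos (mul_pos (ha i0 hi0) (ha j0 hj0)) hpos
  have hid : ∑ i ∈ s, ∑ j ∈ s, a i * a j * ((a i - a j) * (w j - w i))
      = (∑ i ∈ s, a i ^ 2) * (∑ i ∈ s, a i * w i)
        - (∑ i ∈ s, a i ^ 2 * w i) * (∑ i ∈ s, a i)
        - (∑ i ∈ s, a i) * (∑ i ∈ s, a i ^ 2 * w i)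
        + (∑ i ∈ s, a i * w i) * (∑ i ∈ s, a i ^ 2) := by
    rw [Finset.sum_mul_sum, Finset.sum_mul_sum, Finset.sum_mul_sum, Finset.sum_mul_sum]
    rw [← Finset.sum_sub_distrib, ← Finset.sum_sub_distrib, ← Finset.sum_add_distrib]
    refine Finset.sum_congr rfl fun i _ => ?_
    rw [← Finset.sum_sub_distrib, ← Finset.sum_sub_distrib, ← Finset.sum_add_distrib]
    exact Finset.sum_congr rfl fun j _ => by ring
  nlinarith [key, hid]

/-- every finite regularization value is strictly dominated by
the matched-filter limit. -/
theorem rzf_snr_lt_mf (M : ℕ) (hM : 2 ≤ M) (lam : Fin M → ℝ)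
    (hlam : ∀ m, 0 < lam m) (hne : ∃ i j, lam i ≠ lam j) :
    ∀ α : ℝ, 0 ≤ α →
      rzfSnrRatio M lam α < (∑ m, (lam m) ^ 2) / (∑ m, lam m) := by
  intro α hα
  haveI : Nonempty (Fin M) := ⟨⟨0, by omega⟩⟩
  have hwpos : ∀ m, (0:ℝ) < ((lam m + α) ^ 2)⁻¹ := fun m => by
    have := hlam m; positivity
  have h2 : 0 < ∑ m, lam m := Finset.sum_pos (fun m _ => hlam m) Finset.univ_nonempty
  have h4 : 0 < ∑ m, lam m / (lam m + α) ^ 2 := by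
    refine Finset.sum_pos (fun m _ => ?_) Finset.univ_nonempty
    have h1 := hlam m
    positivity
  have H := cheb_aux Finset.univ lam (fun m => ((lam m + α) ^ 2)⁻¹)
    (fun i _ => hlam i)
    (fun i _ j _ => by
      rw [sign_aux (lam i) (lam j) α (hlam i) (hlam j) hα]
      have hi := hlam i; have hj := hlam j
      positivity)
    (by
      obtain ⟨i, j, hij⟩ := hne
      refine ⟨i, Finset.mem_univ i, j, Finset.mem_univ j, ?_⟩
      rw [sign_aux (lam i) (lam j) α (hlam i) (hlam j) hα]
      have hi := hlam i; have hj := hlam j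
      have hij' : lam i - lam j ≠ 0 := sub_ne_zero.mpr hij
      positivity)
  rw [rzfSnrRatio, div_lt_div_iff₀ h4 h2]
  simpa [div_eq_mul_inv] using H
end

section
/- (Theorem 1.) Let M ≥ 2, let λ_1, …, λ_M be positive real numbers, not all equal (the squared norms of the orthogonally selected channel vectors), let P > 0, σ^2 > 0 and e^2 > 0, and define the average SNR of regularized zero-forcing beamforming with regularizing factor α as SNR(α) = (P / (M(e^2 P + σ^2))) · (∑_{m=1}^M λ_m^2/(λ_m+α)^2) / (∑_{m=1}^M λ_m/(λ_m+α)^2). With α_ZF = 0, α_RZF = M σ^2 / P, α_RRZF = M(σ^2/P + e^2), and SNR_MF = (P / (M(e^2 P + σ^2))) · (∑_{m=1}^M λ_m^2)/(∑_{m=1}^M λ_m) the matched-filter value (the limit of SNR(α) as α → ∞), one has the strict chain SNR(α_ZF) < SNR(α_RZF) < SNR(α_RRZF) < SNR_MF. -/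
open Finset

/-- Average per-user SNR of RZF beamforming with regularizing factor `α`
over orthogonal channels with squared channel norms `lam`, transmit power
`P`, noise variance `σ2` and CSI-error power `e2`. -/
noncomputable def rzfSnr (M : ℕ) (lam : Fin M → ℝ) (P σ2 e2 : ℝ) (α : ℝ) : ℝ :=
  (P / (M * (e2 * P + σ2))) *
    ((∑ m, (lam m) ^ 2 / (lam m + α) ^ 2) / (∑ m, lam m / (lam m + α) ^ 2))

/-- Chebyshev-type strict inequality for weighted means: tilting positive
weights `w` by a positive multiplier `u` that is strictly increasing with
`l` strictly increases the weighted mean of `l`, provided `l` is not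
constant. -/
lemma ratio_lt {M : ℕ} (hM : 0 < M) (w u l : Fin M → ℝ)
    (hw : ∀ i, 0 < w i) (hu : ∀ i, 0 < u i)
    (hmono : ∀ i j, l i < l j → u i < u j)
    (hne : ∃ i j, l i ≠ l j) :
    (∑ i, w i * l i) / (∑ i, w i)
      < (∑ i, w i * u i * l i) / (∑ i, w i * u i) := by
  have hNe : (Finset.univ : Finset (Fin M)).Nonempty := ⟨⟨0, hM⟩, Finset.mem_univ _⟩
  have hT : 0 < ∑ i, w i := Finset.sum_pos (fun i _ => hw i) hNe
  have hTu : 0 < ∑ i, w i * u i :=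
    Finset.sum_pos (fun i _ => mul_pos (hw i) (hu i)) hNe
  rw [div_lt_div_iff₀ hT hTu]
  -- termwise nonnegativity
  have hterm : ∀ i j, 0 ≤ w i * w j * ((l i - l j) * (u i - u j)) := by
    intro i j
    have : 0 ≤ (l i - l j) * (u i - u j) := by
      rcases lt_trichotomy (l i) (l j) with h | h | h
      · have := hmono i j h; nlinarith
      · simp [h]
      · have := hmono j i h; nlinarith
    exact mul_nonneg (mul_nonneg (hw i).le (hw j).le) this
  obtain ⟨i₀, j₀, hij⟩ := hne
  have hposterm : 0 < w i₀ * w j₀ * ((l i₀ - l j₀) * (u i₀ - u j₀)) := by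
    rcases lt_or_gt_of_ne hij with h | h
    · have h1 := hmono i₀ j₀ h
      exact mul_pos (mul_pos (hw i₀) (hw j₀))
        (mul_pos_of_neg_of_neg (by linarith) (by linarith))
    · have h1 := hmono j₀ i₀ h
      exact mul_pos (mul_pos (hw i₀) (hw j₀))
        (mul_pos (by linarith) (by linarith))
  have hsum : 0 < ∑ i, ∑ j, w i * w j * ((l i - l j) * (u i - u j)) := by
    refine Finset.sum_pos' (fun i _ => Finset.sum_nonneg fun j _ => hterm i j) ?_
    refine ⟨i₀, Finset.mem_univ _, ?_⟩
    exact Finset.sum_pos' (fun j _ => hterm i₀ j) ⟨j₀, Finset.mem_univ _, hposterm⟩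
  -- expand the difference as a symmetrized double sum
  have key : ((∑ i, w i * u i * l i) * ∑ i, w i) - (∑ i, w i * l i) * (∑ i, w i * u i)
      = (∑ i, ∑ j, w i * w j * ((l i - l j) * (u i - u j))) / 2 := by
    have e1 : ((∑ i, w i * u i * l i) * ∑ i, w i)
        = ∑ i, ∑ j, (w i * u i * l i) * w j := Finset.sum_mul_sum _ _ _ _
    have e2 : ((∑ i, w i * l i) * ∑ i, w i * u i)
        = ∑ i, ∑ j, (w i * l i) * (w j * u j) := Finset.sum_mul_sum _ _ _ _
    have swap1 : (∑ i, ∑ j, (w i * u i * l i) * w j)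
        = ∑ i, ∑ j, (w j * u j * l j) * w i := Finset.sum_comm
    have swap2 : (∑ i, ∑ j, (w i * l i) * (w j * u j))
        = ∑ i, ∑ j, (w j * l j) * (w i * u i) := Finset.sum_comm
    have h2 : (((∑ i, w i * u i * l i) * ∑ i, w i)
          - (∑ i, w i * l i) * (∑ i, w i * u i)) * 2
        = ∑ i, ∑ j, w i * w j * ((l i - l j) * (u i - u j)) := by
      calc (((∑ i, w i * u i * l i) * ∑ i, w i)
            - (∑ i, w i * l i) * (∑ i, w i * u i)) * 2
          = ((∑ i, ∑ j, (w i * u i * l i) * w j)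
              + ∑ i, ∑ j, (w j * u j * l j) * w i)
            - ((∑ i, ∑ j, (w i * l i) * (w j * u j))
              + ∑ i, ∑ j, (w j * l j) * (w i * u i)) := by
            rw [e1, e2]; rw [← swap1, ← swap2]; ring
        _ = ∑ i, ∑ j, w i * w j * ((l i - l j) * (u i - u j)) := by
            rw [← Finset.sum_add_distrib, ← Finset.sum_add_distrib,
              ← Finset.sum_sub_distrib]
            refine Finset.sum_congr rfl fun i _ => ?_
            rw [← Finset.sum_add_distrib, ← Finset.sum_add_distrib,
              ← Finset.sum_sub_distrib]
            exact Finset.sum_congr rfl fun j _ => by ring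
    linarith
  nlinarith [key, hsum]

/-- The SNR ratio is strictly increasing in the regularizing factor. -/
lemma F_lt {M : ℕ} (hM : 0 < M) (lam : Fin M → ℝ) (hlam : ∀ m, 0 < lam m)
    (hne : ∃ i j, lam i ≠ lam j) {a b : ℝ} (ha : 0 ≤ a) (hab : a < b) :
    (∑ m, (lam m) ^ 2 / (lam m + a) ^ 2) / (∑ m, lam m / (lam m + a) ^ 2)
      < (∑ m, (lam m) ^ 2 / (lam m + b) ^ 2) / (∑ m, lam m / (lam m + b) ^ 2) := by
  set w : Fin M → ℝ := fun m => lam m / (lam m + a) ^ 2 with hw_def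
  set u : Fin M → ℝ := fun m => ((lam m + a) / (lam m + b)) ^ 2 with hu_def
  have hla : ∀ m, 0 < lam m + a := fun m => by have := hlam m; linarith
  have hlb : ∀ m, 0 < lam m + b := fun m => by have := hlam m; linarith
  have hw : ∀ m, 0 < w m := fun m => div_pos (hlam m) (pow_pos (hla m) 2)
  have hu : ∀ m, 0 < u m := fun m => pow_pos (div_pos (hla m) (hlb m)) 2
  have hmono : ∀ i j, lam i < lam j → u i < u j := by
    intro i j hij
    have h1 : (lam i + a) / (lam i + b) < (lam j + a) / (lam j + b) := by
      rw [div_lt_div_iff₀ (hlb i) (hlb j)]; nlinarith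
    have h0 : 0 ≤ (lam i + a) / (lam i + b) := le_of_lt (div_pos (hla i) (hlb i))
    exact pow_lt_pow_left₀ h1 h0 (by norm_num)
  have key := ratio_lt hM w u lam hw hu hmono hne
  have ea1 : (∑ m, (lam m) ^ 2 / (lam m + a) ^ 2) = ∑ m, w m * lam m :=
    Finset.sum_congr rfl fun m _ => by simp only [hw_def]; ring
  have ea2 : (∑ m, lam m / (lam m + a) ^ 2) = ∑ m, w m := rfl
  have eb1 : (∑ m, (lam m) ^ 2 / (lam m + b) ^ 2) = ∑ m, w m * u m * lam m :=
    Finset.sum_congr rfl fun m _ => by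
      simp only [hw_def, hu_def]
      have h1 : (lam m + a) ^ 2 ≠ 0 := ne_of_gt (pow_pos (hla m) 2)
      have h2 : (lam m + b) ^ 2 ≠ 0 := ne_of_gt (pow_pos (hlb m) 2)
      have h3 : lam m + a ≠ 0 := (hla m).ne'
      have h4 : lam m + b ≠ 0 := (hlb m).ne'
      field_simp
  have eb2 : (∑ m, lam m / (lam m + b) ^ 2) = ∑ m, w m * u m :=
    Finset.sum_congr rfl fun m _ => by
      simp only [hw_def, hu_def]
      have h1 : (lam m + a) ^ 2 ≠ 0 := ne_of_gt (pow_pos (hla m) 2)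
      have h2 : (lam m + b) ^ 2 ≠ 0 := ne_of_gt (pow_pos (hlb m) 2)
      have h3 : lam m + a ≠ 0 := (hla m).ne'
      have h4 : lam m + b ≠ 0 := (hlb m).ne'
      field_simp
  rw [ea1, ea2, eb1, eb2]
  exact key

/-- The SNR ratio is strictly below its matched-filter limit. -/
lemma F_lt_mf {M : ℕ} (hM : 0 < M) (lam : Fin M → ℝ) (hlam : ∀ m, 0 < lam m)
    (hne : ∃ i j, lam i ≠ lam j) {c : ℝ} (hc : 0 < c) :
    (∑ m, (lam m) ^ 2 / (lam m + c) ^ 2) / (∑ m, lam m / (lam m + c) ^ 2)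
      < (∑ m, (lam m) ^ 2) / (∑ m, lam m) := by
  set w : Fin M → ℝ := fun m => lam m / (lam m + c) ^ 2 with hw_def
  set u : Fin M → ℝ := fun m => (lam m + c) ^ 2 with hu_def
  have hlc : ∀ m, 0 < lam m + c := fun m => by have := hlam m; linarith
  have hw : ∀ m, 0 < w m := fun m => div_pos (hlam m) (pow_pos (hlc m) 2)
  have hu : ∀ m, 0 < u m := fun m => pow_pos (hlc m) 2
  have hmono : ∀ i j, lam i < lam j → u i < u j := by
    intro i j hij
    exact pow_lt_pow_left₀ (by linarith) (hlc i).le (by norm_num)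
  have key := ratio_lt hM w u lam hw hu hmono hne
  have ea1 : (∑ m, (lam m) ^ 2 / (lam m + c) ^ 2) = ∑ m, w m * lam m :=
    Finset.sum_congr rfl fun m _ => by simp only [hw_def]; ring
  have eb1 : (∑ m, (lam m) ^ 2) = ∑ m, w m * u m * lam m :=
    Finset.sum_congr rfl fun m _ => by
      simp only [hw_def, hu_def]
      have h1 : (lam m + c) ^ 2 ≠ 0 := ne_of_gt (pow_pos (hlc m) 2)
      have h3 : lam m + c ≠ 0 := (hlc m).ne'
      field_simp
  have eb2 : (∑ m, lam m) = ∑ m, w m * u m :=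
    Finset.sum_congr rfl fun m _ => by
      simp only [hw_def, hu_def]
      have h1 : (lam m + c) ^ 2 ≠ 0 := ne_of_gt (pow_pos (hlc m) 2)
      have h3 : lam m + c ≠ 0 := (hlc m).ne'
      field_simp
  rw [ea1, eb1, eb2]
  exact key

/-- Theorem 1: SNR_ZF < SNR_RZF < SNR_RRZF < SNR_MF. -/
theorem snr_chain (M : ℕ) (hM : 2 ≤ M) (lam : Fin M → ℝ)
    (hlam : ∀ m, 0 < lam m) (hne : ∃ i j, lam i ≠ lam j)
    (P σ2 e2 : ℝ) (hP : 0 < P) (hσ2 : 0 < σ2) (he2 : 0 < e2) :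
    rzfSnr M lam P σ2 e2 0 < rzfSnr M lam P σ2 e2 (M * σ2 / P) ∧
    rzfSnr M lam P σ2 e2 (M * σ2 / P)
      < rzfSnr M lam P σ2 e2 (M * (σ2 / P + e2)) ∧
    rzfSnr M lam P σ2 e2 (M * (σ2 / P + e2))
      < (P / (M * (e2 * P + σ2))) * ((∑ m, (lam m) ^ 2) / (∑ m, lam m)) := by
  have hM0 : 0 < M := lt_of_lt_of_le (by norm_num) hM
  have hMR : (0 : ℝ) < (M : ℝ) := by exact_mod_cast hM0
  have hcpos : 0 < P / (M * (e2 * P + σ2)) := by positivity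
  have h1 : (0 : ℝ) < (M : ℝ) * σ2 / P := by positivity
  have h2 : (M : ℝ) * σ2 / P < (M : ℝ) * (σ2 / P + e2) := by
    rw [mul_add, mul_div_assoc]
    nlinarith [mul_pos hMR he2]
  have h3 : (0 : ℝ) < (M : ℝ) * (σ2 / P + e2) := by positivity
  refine ⟨?_, ?_, ?_⟩
  · exact mul_lt_mul_of_pos_left (F_lt hM0 lam hlam hne le_rfl h1) hcpos
  · exact mul_lt_mul_of_pos_left (F_lt hM0 lam hlam hne h1.le h2) hcpos
  · exact mul_lt_mul_of_pos_left (F_lt_mf hM0 lam hlam hne h3) hcpos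
end
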